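/- For all natural numbers n, p, q, the identity ∑_{k=0}^{n} C(n,k) · (2n−2k−1+q)!! · (2k−1+p)!! = ((p−1)!! · (q−1)!! / (p+q)!!) · (2n+p+q)!! holds, where !! denotes the double factorial with the convention (−1)!! = 0!! = 1. -/
import Mathlib

open scoped Nat

lemma df_step (n p q : ℕ) :
    ∑ k ∈ Finset.range (n + 2),
        (n + 1).choose k * (2 * (n + 1 - k) + q - 1)‼ * (2 * k + p - 1)‼ =
      (2 * n + p + q + 2) *
        ∑ k ∈ Finset.range (n + 1), n.choose k * (2 * (n - k) + q - 1)‼ * (2 * k + p - 1)‼ := by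
  have h := Finset.sum_choose_succ_mul (R := ℕ)
      (fun i j => (2 * j + q - 1)‼ * (2 * i + p - 1)‼) n
  simp only [Nat.cast_id] at h
  calc
    ∑ k ∈ Finset.range (n + 2),
        (n + 1).choose k * (2 * (n + 1 - k) + q - 1)‼ * (2 * k + p - 1)‼
      = ∑ k ∈ Finset.range (n + 2),
        (n + 1).choose k * ((2 * (n + 1 - k) + q - 1)‼ * (2 * k + p - 1)‼) := by
        simp [mul_assoc]
    _ = (∑ i ∈ Finset.range (n + 1),
          n.choose i * ((2 * (n + 1 - i) + q - 1)‼ * (2 * i + p - 1)‼)) +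
        ∑ i ∈ Finset.range (n + 1),
          n.choose i * ((2 * (n - i) + q - 1)‼ * (2 * (i + 1) + p - 1)‼) := h
    _ = (2 * n + p + q + 2) *
        ∑ k ∈ Finset.range (n + 1), n.choose k * (2 * (n - k) + q - 1)‼ * (2 * k + p - 1)‼ := by
        rw [Finset.mul_sum, ← Finset.sum_add_distrib]
        refine Finset.sum_congr rfl fun k hk => ?_
        have hkn : k ≤ n := Nat.lt_succ_iff.mp (Finset.mem_range.mp hk)
        have h1 : 2 * (n + 1 - k) + q - 1 = 2 * (n - k) + q + 1 := by omega
        have h2 : 2 * (k + 1) + p - 1 = 2 * k + p + 1 := by omega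
        rw [h1, h2, Nat.doubleFactorial_add_one (2 * (n - k) + q),
          Nat.doubleFactorial_add_one (2 * k + p)]
        have h3 : 2 * (n - k) + q + 1 + (2 * k + p + 1) = 2 * n + p + q + 2 := by omega
        have h4 : 2 * (n - k) + q - 1 = 2 * (n - k) + q - 1 := rfl
        -- pure ring identity now
        set a := (2 * (n - k) + q - 1)‼ with ha
        set b := (2 * k + p - 1)‼ with hb
        calc n.choose k * ((2 * (n - k) + q + 1) * a * b) +
              n.choose k * (a * ((2 * k + p + 1) * b))
            = (2 * (n - k) + q + 1 + (2 * k + p + 1)) * (n.choose k * a * b) := by ring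
          _ = (2 * n + p + q + 2) * (n.choose k * a * b) := by rw [h3]

/-- For all natural numbers `n p q`,
`(p+q)‼ * ∑_{k=0}^{n} C(n,k) (2n−2k−1+q)‼ (2k−1+p)‼ = (p−1)‼ (q−1)‼ (2n+p+q)‼`,
with the double factorial convention `(−1)‼ = 0‼ = 1` (realized here by writing the
arguments with truncated subtraction so that e.g. `2(n−k)+q−1 = 2n−2k−1+q`). -/
theorem doubleFactorial_binomial_sum (n p q : ℕ) :
    (p + q)‼ * ∑ k ∈ Finset.range (n + 1),
        n.choose k * (2 * (n - k) + q - 1)‼ * (2 * k + p - 1)‼ =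
      (p - 1)‼ * (q - 1)‼ * (2 * n + p + q)‼ := by
  induction n with
  | zero => simp [mul_comm, mul_assoc, mul_left_comm]
  | succ n ih =>
    have h2 : 2 * (n + 1) + p + q = 2 * n + p + q + 2 := by ring
    rw [df_step n p q, h2, Nat.doubleFactorial_add_two, ← mul_assoc,
      mul_comm ((p+q)‼) (2 * n + p + q + 2), mul_assoc, ih]
    ring
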